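/- Let (η_j)_{j≥1} be independent random variables with η_j Gamma-distributed with parameter j/2, and set R_j = η_j/η_{j+1}. Then for any p > 2, almost surely Σ_{k≥1} |R_k - 1|^p < ∞. -/

import Mathlib

open MeasureTheory ProbabilityTheory Real Set

open Filter


-- log inequalities
lemma aux_log1 {t : ℝ} (h0 : 0 ≤ t) (h2 : t ≤ 1/2) : -Real.log (1 - t) ≤ t + 2*t^2 := by
  have h1 : (0:ℝ) < 1 - t := by linarith
  have hexp : Real.exp (-(t + 2*t^2)) ≤ 1 - t := by
    have h3 : Real.exp (-(t + 2*t^2)) * (1 + (t + 2*t^2)) ≤ 1 := by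
      have h4 := Real.add_one_le_exp (t + 2*t^2)
      have h5 : Real.exp (-(t + 2*t^2)) * Real.exp (t + 2*t^2) = 1 := by
        rw [← Real.exp_add, neg_add_cancel, Real.exp_zero]
      nlinarith [Real.exp_pos (-(t + 2*t^2))]
    nlinarith [Real.exp_pos (-(t + 2*t^2))]
  have := Real.log_le_log (Real.exp_pos _) hexp
  rw [Real.log_exp] at this
  linarith

lemma aux_log2 {t : ℝ} (h0 : 0 ≤ t) (h2 : t ≤ 1/2) : t - t^2 ≤ Real.log (1 + t) := by
  rw [Real.le_log_iff_exp_le (by linarith : (0:ℝ) < 1 + t)]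
  have h3 : (1 - (t - t^2)) * Real.exp (t - t^2) ≤ 1 := by
    have h4 := Real.add_one_le_exp (-(t - t^2))
    have h5 : Real.exp (-(t - t^2)) * Real.exp (t - t^2) = 1 := by
      rw [← Real.exp_add, neg_add_cancel, Real.exp_zero]
    nlinarith [Real.exp_pos (t - t^2)]
  nlinarith [Real.exp_pos (t - t^2)]


lemma gamma_exp_lintegral {a t c : ℝ} (ha : 0 < a) (ht : t < 1) :
    ∫⁻ x, ENNReal.ofReal (Real.exp (t * x + c)) ∂(gammaMeasure a 1) =
      ENNReal.ofReal (Real.exp c * (1 - t) ^ (-a)) := by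
  have hr : (0:ℝ) < 1 - t := by linarith
  have hΓ : (0:ℝ) < Real.Gamma a := Real.Gamma_pos_of_pos ha
  have hf : Measurable (gammaPDF a 1) := (measurable_gammaPDFReal a 1).ennreal_ofReal
  rw [gammaMeasure, lintegral_withDensity_eq_lintegral_mul _ hf
    (by exact (Real.measurable_exp.comp (by fun_prop)).ennreal_ofReal)]
  rw [← lintegral_add_compl _ measurableSet_Ici (μ := volume), compl_Ici]
  have hIio : ∫⁻ x in Iio 0, (gammaPDF a 1 * fun x => ENNReal.ofReal (Real.exp (t * x + c))) x = 0 := by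
    rw [setLIntegral_congr_fun (g := fun _ => 0) measurableSet_Iio]
    · exact lintegral_zero
    · intro x hx
      simp [Pi.mul_apply, gammaPDF_of_neg hx]
  rw [hIio, add_zero]
  have hIci : ∫⁻ x in Ici 0, (gammaPDF a 1 * fun x => ENNReal.ofReal (Real.exp (t * x + c))) x =
      ∫⁻ x in Ici 0, ENNReal.ofReal ((Real.exp c / Real.Gamma a) *
        (x ^ (a-1) * Real.exp (-((1-t) * x)))) := by
    apply setLIntegral_congr_fun measurableSet_Ici
    intro x hx
    have hx0 : (0:ℝ) ≤ x := hx
    rw [Pi.mul_apply, gammaPDF_of_nonneg hx, ← ENNReal.ofReal_mul (by positivity)]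
    congr 1
    rw [Real.one_rpow]
    have hexp : Real.exp (-x) * Real.exp (t*x + c) = Real.exp (-((1-t)*x)) * Real.exp c := by
      rw [← Real.exp_add, ← Real.exp_add]; ring_nf
    have hΓ' : Real.Gamma a ≠ 0 := hΓ.ne'
    field_simp
    rw [mul_comm x t, mul_comm x (1-t)]
    linear_combination (x ^ (a-1)) * hexp
  rw [hIci, ← restrict_Ioi_eq_restrict_Ici]
  have hint : IntegrableOn (fun x : ℝ => x ^ (a-1) * Real.exp (-((1-t) * x))) (Ioi 0) := by
    have := integrableOn_rpow_mul_exp_neg_mul_rpow (by linarith : (-1:ℝ) < a - 1) one_pos hr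
    have heq : (fun x : ℝ => x ^ (a-1) * Real.exp (-(1-t) * x ^ (1:ℝ)))
        = fun x : ℝ => x ^ (a-1) * Real.exp (-((1-t) * x)) := by
      funext x; rw [Real.rpow_one, neg_mul]
    rwa [heq] at this
  have hint2 : IntegrableOn (fun x : ℝ => (Real.exp c / Real.Gamma a) *
      (x ^ (a-1) * Real.exp (-((1-t) * x)))) (Ioi 0) := hint.const_mul _
  rw [← ofReal_integral_eq_lintegral_ofReal hint2]
  · rw [integral_const_mul, integral_rpow_mul_exp_neg_mul_Ioi ha hr]
    congr 1
    rw [one_div, Real.inv_rpow hr.le, Real.rpow_neg hr.le]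
    field_simp
  · filter_upwards [self_mem_ae_restrict measurableSet_Ioi] with x hx
    have hx0 : (0:ℝ) < x := hx
    positivity

lemma gamma_tail_gen {a : ℝ} (ha : 0 < a) {S : Set ℝ} (hS : MeasurableSet S)
    {t c : ℝ} (ht : t < 1) (hpt : ∀ x ∈ S, 0 ≤ t * x + c) :
    gammaMeasure a 1 S ≤ ENNReal.ofReal (Real.exp c * (1 - t) ^ (-a)) := by
  have : IsProbabilityMeasure (gammaMeasure a 1) := isProbabilityMeasure_gammaMeasure ha one_pos
  calc gammaMeasure a 1 S = ∫⁻ x in S, 1 ∂(gammaMeasure a 1) := (setLIntegral_one _).symm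
  _ ≤ ∫⁻ x in S, ENNReal.ofReal (Real.exp (t * x + c)) ∂(gammaMeasure a 1) := by
      apply setLIntegral_mono' hS
      intro x hx
      rw [show (1:ENNReal) = ENNReal.ofReal 1 by simp]
      exact ENNReal.ofReal_le_ofReal (by simpa using Real.one_le_exp (hpt x hx))
  _ ≤ ∫⁻ x, ENNReal.ofReal (Real.exp (t * x + c)) ∂(gammaMeasure a 1) :=
      setLIntegral_le_lintegral _ _
  _ = _ := gamma_exp_lintegral ha ht

lemma gamma_tail {a δ : ℝ} (ha : 0 < a) (hδ0 : 0 < δ) (hδ1 : δ ≤ 1) :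
    gammaMeasure a 1 ((Icc ((1-δ)*a) ((1+δ)*a))ᶜ) ≤
      ENNReal.ofReal (2 * Real.exp (-(a*δ^2/9))) := by
  have hsub : (Icc ((1-δ)*a) ((1+δ)*a))ᶜ ⊆
      {x : ℝ | x ≤ (1-δ)*a} ∪ {x : ℝ | (1+δ)*a ≤ x} := by
    intro x hx
    rw [mem_compl_iff, mem_Icc, not_and_or] at hx
    rcases hx with h | h
    · exact Or.inl (le_of_lt (not_le.mp h))
    · exact Or.inr (le_of_lt (not_le.mp h))
  refine le_trans (measure_mono hsub) (le_trans (measure_union_le _ _) ?_)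
  have hlow : gammaMeasure a 1 {x : ℝ | x ≤ (1-δ)*a} ≤
      ENNReal.ofReal (Real.exp (-(a*δ^2/9))) := by
    refine le_trans (gamma_tail_gen ha (measurableSet_le measurable_id measurable_const)
      (t := -(δ/2)) (c := (δ/2)*((1-δ)*a)) (by linarith) ?_) ?_
    · intro x hx
      have : x ≤ (1-δ)*a := hx
      nlinarith
    · apply ENNReal.ofReal_le_ofReal
      have h1t : 1 - (-(δ/2)) = 1 + δ/2 := by ring
      rw [h1t, Real.rpow_def_of_pos (by linarith : (0:ℝ) < 1 + δ/2), ← Real.exp_add]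
      apply Real.exp_le_exp.mpr
      have hlog := aux_log2 (t := δ/2) (by linarith) (by linarith)
      nlinarith [mul_le_mul_of_nonneg_left hlog ha.le]
  have hupp : gammaMeasure a 1 {x : ℝ | (1+δ)*a ≤ x} ≤
      ENNReal.ofReal (Real.exp (-(a*δ^2/9))) := by
    refine le_trans (gamma_tail_gen ha (measurableSet_le measurable_const measurable_id)
      (t := δ/3) (c := -((δ/3)*((1+δ)*a))) (by linarith) ?_) ?_
    · intro x hx
      have : (1+δ)*a ≤ x := hx
      nlinarith
    · apply ENNReal.ofReal_le_ofReal
      rw [Real.rpow_def_of_pos (by linarith : (0:ℝ) < 1 - δ/3), ← Real.exp_add]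
      apply Real.exp_le_exp.mpr
      have hlog := aux_log1 (t := δ/3) (by linarith) (by linarith)
      nlinarith [mul_le_mul_of_nonneg_left hlog ha.le]
  calc gammaMeasure a 1 {x : ℝ | x ≤ (1-δ)*a} + gammaMeasure a 1 {x : ℝ | (1+δ)*a ≤ x}
      ≤ ENNReal.ofReal (Real.exp (-(a*δ^2/9))) + ENNReal.ofReal (Real.exp (-(a*δ^2/9))) :=
        add_le_add hlow hupp
  _ = ENNReal.ofReal (2 * Real.exp (-(a*δ^2/9))) := by
      rw [← ENNReal.ofReal_add (by positivity) (by positivity)]; ring_nf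


lemma ratio_bound {a b d e x y : ℝ} (ha : 1 ≤ a) (hb : b = a + 1/2)
    (hd0 : 0 < d) (hd : d ≤ 1/2) (he0 : 0 ≤ e) (hed : e ≤ d) (had : 1 ≤ a * d)
    (hx : x ∈ Icc ((1-d)*a) ((1+d)*a)) (hy : y ∈ Icc ((1-e)*b) ((1+e)*b)) :
    |x/y - 1| ≤ 6*d := by
  obtain ⟨hx1, hx2⟩ := hx
  obtain ⟨hy1, hy2⟩ := hy
  have hb1 : (3/2:ℝ) ≤ b := by rw [hb]; linarith
  have hy0 : (0:ℝ) < y := by nlinarith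
  rw [abs_le]
  constructor
  · have h2 : 1 - 6*d ≤ x/y := by
      rw [le_div_iff₀ hy0]
      nlinarith [mul_le_mul_of_nonneg_left hed (by linarith : (0:ℝ) ≤ a),
        mul_nonneg he0 hd0.le, mul_nonneg he0 hd0.le, sq_nonneg (d-e), sq_nonneg d]
    linarith
  · have h2 : x/y ≤ 1 + 6*d := by
      rw [div_le_iff₀ hy0]
      nlinarith [mul_le_mul_of_nonneg_left hed (by linarith : (0:ℝ) ≤ a),
        mul_nonneg he0 hd0.le]
    linarith

set_option maxHeartbeats 2000000 in
theorem ratios_lp_summable {Ω : Type*} [MeasurableSpace Ω] (μ : Measure Ω)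
    [IsProbabilityMeasure μ] (η : ℕ → Ω → ℝ) (hηm : ∀ j, Measurable (η j))
    (hindep : iIndepFun η μ)
    (hlaw : ∀ j, 1 ≤ j → μ.map (η j) = gammaMeasure ((j : ℝ) / 2) 1)
    (p : ℝ) (hp : 2 < p) :
    ∀ᵐ ω ∂μ, Summable (fun k : ℕ => |η (k + 1) ω / η (k + 2) ω - 1| ^ p) := by
  have hp0 : (0:ℝ) < p := by linarith
  set α : ℝ := (1/p + 1/2)/2 with hα
  have hp2 : 1/p < 1/2 := by
    rw [div_lt_div_iff₀ hp0 two_pos]; linarith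
  have hα0 : 0 < α := by rw [hα]; positivity
  have hα2 : α < 1/2 := by rw [hα]; linarith
  have hα1 : α < 1 := by linarith
  have hαp : 1 < α * p := by
    have h1 : 1/p < α := by rw [hα]; linarith
    calc (1:ℝ) = (1/p) * p := by field_simp
    _ < α * p := by exact mul_lt_mul_of_pos_right h1 hp0
  set δ : ℕ → ℝ := fun j => (j:ℝ) ^ (-α) with hδ
  set E : ℕ → Set Ω := fun j =>
    η j ⁻¹' (Icc ((1 - δ j) * ((j:ℝ)/2)) ((1 + δ j) * ((j:ℝ)/2)))ᶜ with hE
  -- tail bound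
  have hEbound : ∀ j : ℕ, 1 ≤ j →
      μ (E j) ≤ ENNReal.ofReal (2 * Real.exp (-((j:ℝ)^(1-2*α)/18))) := by
    intro j hj
    have hj1 : (1:ℝ) ≤ (j:ℝ) := by exact_mod_cast hj
    have hj0 : (0:ℝ) < (j:ℝ) := by linarith
    have hmap : μ (E j) = gammaMeasure ((j:ℝ)/2) 1
        ((Icc ((1 - δ j) * ((j:ℝ)/2)) ((1 + δ j) * ((j:ℝ)/2)))ᶜ) := by
      rw [hE, ← hlaw j hj, Measure.map_apply (hηm j) measurableSet_Icc.compl]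
    rw [hmap]
    have hδ0 : 0 < δ j := Real.rpow_pos_of_pos hj0 _
    have hδ1 : δ j ≤ 1 := Real.rpow_le_one_of_one_le_of_nonpos hj1 (by linarith)
    refine le_trans (gamma_tail (by positivity) hδ0 hδ1) (ENNReal.ofReal_le_ofReal ?_)
    have hsq : (δ j)^2 = (j:ℝ)^(-(2*α)) := by
      rw [hδ]
      rw [← Real.rpow_natCast ((j:ℝ)^(-α)) 2, ← Real.rpow_mul hj0.le]
      norm_num
      congr 1
      ring
    have hkey : (j:ℝ)/2 * (δ j)^2 / 9 = (j:ℝ)^(1-2*α)/18 := by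
      rw [hsq, show (1-2*α : ℝ) = 1 + -(2*α) by ring, Real.rpow_add hj0, Real.rpow_one]
      ring
    rw [hkey]
  -- summability of tail bounds
  have hsum : (∑' j, μ (E j)) ≠ ⊤ := by
    set β : ℝ := 1 - 2*α with hβ
    have hβ0 : 0 < β := by rw [hβ]; linarith
    have hβ1 : β ≤ 1 := by rw [hβ]; linarith
    obtain ⟨n, hn⟩ := exists_nat_ge (2/β)
    have hn2 : 2 ≤ (n:ℝ) * β := by
      rw [div_le_iff₀ hβ0] at hn; linarith
    have hncast : (2:ℝ) ≤ (n:ℝ) := by nlinarith [Nat.cast_nonneg (α := ℝ) n]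
    set C : ℝ := (18*(n:ℝ))^n with hC
    have hC0 : 0 < C := by
      rw [hC]; positivity
    have hterm : ∀ j : ℕ, 1 ≤ j →
        Real.exp (-((j:ℝ)^β/18)) ≤ C * (((j:ℝ)^2)⁻¹) := by
      intro j hj
      have hj1 : (1:ℝ) ≤ (j:ℝ) := by exact_mod_cast hj
      have hj0 : (0:ℝ) < (j:ℝ) := by linarith
      set x : ℝ := (j:ℝ)^β/18 with hx
      have hx0 : 0 < x := by rw [hx]; positivity
      -- j^2 ≤ C * exp x
      have hkey : (j:ℝ)^2 ≤ C * Real.exp x := by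
        have e1 : ((j:ℝ)^2 : ℝ) ≤ (j:ℝ)^((n:ℝ)*β) := by
          rw [show ((j:ℝ)^2 : ℝ) = (j:ℝ)^((2:ℕ):ℝ) by rw [Real.rpow_natCast]]
          exact Real.rpow_le_rpow_of_exponent_le hj1 (by exact_mod_cast hn2)
        have e2 : (j:ℝ)^((n:ℝ)*β) = (18*x)^n := by
          rw [hx, mul_comm (n:ℝ) β, Real.rpow_mul hj0.le, Real.rpow_natCast]
          congr 1
          field_simp
        have e3 : x ≤ (n:ℝ) * Real.exp (x/(n:ℝ)) := by
          have hn0 : (0:ℝ) < n := by linarith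
          have := Real.add_one_le_exp (x/(n:ℝ))
          have h4 : x/(n:ℝ) ≤ Real.exp (x/(n:ℝ)) := by linarith
          calc x = (n:ℝ) * (x/(n:ℝ)) := by field_simp
          _ ≤ (n:ℝ) * Real.exp (x/(n:ℝ)) := by
            exact mul_le_mul_of_nonneg_left h4 hn0.le
        have e4 : (18*x)^n ≤ (18*((n:ℝ) * Real.exp (x/(n:ℝ))))^n := by
          apply pow_le_pow_left₀ (by linarith) (by linarith)
        have e5 : (18*((n:ℝ) * Real.exp (x/(n:ℝ))))^n = C * Real.exp x := by
          rw [hC, show 18*((n:ℝ) * Real.exp (x/(n:ℝ))) = (18*(n:ℝ)) * Real.exp (x/(n:ℝ)) by ring,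
            mul_pow, ← Real.exp_nat_mul]
          congr 2
          have hn0 : ((n:ℝ)) ≠ 0 := by linarith
          field_simp
        calc ((j:ℝ)^2 : ℝ) ≤ (18*x)^n := e1.trans_eq e2
        _ ≤ C * Real.exp x := e4.trans_eq e5
      have hexpx : (0:ℝ) < Real.exp x := Real.exp_pos _
      rw [Real.exp_neg]
      rw [inv_le_iff_one_le_mul₀ hexpx]
      calc (1:ℝ) = ((j:ℝ)^2) * ((j:ℝ)^2)⁻¹ := by
            rw [mul_inv_cancel₀ (by positivity : ((j:ℝ)^2) ≠ 0)]
      _ ≤ (C * Real.exp x) * ((j:ℝ)^2)⁻¹ := by gcongr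
      _ = C * ((j:ℝ)^2)⁻¹ * Real.exp x := by ring
    -- now bound the tsum
    have hsummable : Summable (fun j : ℕ => 2*C * ((((j+1:ℕ)):ℝ)^2)⁻¹) := by
      apply Summable.mul_left
      exact (summable_nat_add_iff 1).mpr (Real.summable_nat_pow_inv.mpr one_lt_two)
    rw [tsum_eq_zero_add' ENNReal.summable]
    refine ENNReal.add_ne_top.mpr ⟨(measure_ne_top μ _), ?_⟩
    have hle : ∑' (j : ℕ), μ (E (j+1)) ≤ ∑' (j : ℕ),
        ENNReal.ofReal (2*C * ((((j+1:ℕ)):ℝ)^2)⁻¹) := by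
      apply ENNReal.tsum_le_tsum
      intro j
      refine le_trans (hEbound (j+1) (by omega)) (ENNReal.ofReal_le_ofReal ?_)
      have := hterm (j+1) (by omega)
      nlinarith [this]
    refine ne_top_of_le_ne_top ?_ hle
    rw [← ENNReal.ofReal_tsum_of_nonneg (fun j => by positivity) hsummable]
    exact ENNReal.ofReal_ne_top
  -- Borel-Cantelli
  have hBC := MeasureTheory.ae_eventually_notMem hsum
  -- deterministic eventual conditions
  have hcond : ∀ᶠ (j:ℕ) in atTop, ((2:ℝ) ≤ (j:ℝ)^α ∧ (2:ℝ) ≤ (j:ℝ)^(1-α)) ∧ 2 ≤ j := by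
    have t0' : Tendsto (fun j:ℕ => ((j:ℝ))^α) atTop atTop :=
      (tendsto_rpow_atTop hα0).comp tendsto_natCast_atTop_atTop
    have t1' : Tendsto (fun j:ℕ => ((j:ℝ))^(1-α)) atTop atTop :=
      (tendsto_rpow_atTop (by linarith)).comp tendsto_natCast_atTop_atTop
    exact ((t0'.eventually_ge_atTop 2).and (t1'.eventually_ge_atTop 2)).and (eventually_ge_atTop 2)
  obtain ⟨K, hK⟩ := eventually_atTop.mp hcond
  filter_upwards [hBC] with ω hω
  obtain ⟨N, hN⟩ := eventually_atTop.mp hω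
  set M := max N K with hM
  have hgood : ∀ j, M ≤ j →
      η j ω ∈ Icc ((1 - δ j) * ((j:ℝ)/2)) ((1 + δ j) * ((j:ℝ)/2)) := by
    intro j hj
    have h1 := hN j (le_trans (le_max_left N K) hj)
    rw [hE] at h1
    simpa [Set.mem_preimage, not_not] using h1
  have hpt : ∀ j, M ≤ j → |η j ω / η (j+1) ω - 1| ≤ 6 * (j:ℝ)^(-α) := by
    intro j hj
    obtain ⟨⟨hKa, hKb⟩, hK2⟩ := hK j (le_trans (le_max_right N K) hj)
    have hj2 : (2:ℝ) ≤ (j:ℝ) := by exact_mod_cast hK2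
    have hj0 : (0:ℝ) < (j:ℝ) := by linarith
    have hj10 : (0:ℝ) < ((j+1:ℕ):ℝ) := by positivity
    have hgj := hgood j hj
    have hgj1 := hgood (j+1) (by omega)
    have hd0 : 0 < δ j := Real.rpow_pos_of_pos hj0 _
    have hδinv : δ j = ((j:ℝ)^α)⁻¹ := by simp only [hδ]; exact Real.rpow_neg hj0.le α
    have hd : δ j ≤ 1/2 := by
      rw [hδinv]
      calc ((j:ℝ)^α)⁻¹ ≤ (2:ℝ)⁻¹ := inv_anti₀ (by norm_num) hKa
      _ = 1/2 := by norm_num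
    have he0 : 0 ≤ δ (j+1) := (Real.rpow_pos_of_pos hj10 _).le
    have hed : δ (j+1) ≤ δ j := by
      simp only [hδ]
      rw [Real.rpow_neg hj10.le, Real.rpow_neg hj0.le]
      exact inv_anti₀ (Real.rpow_pos_of_pos hj0 _)
        (Real.rpow_le_rpow hj0.le (by push_cast; linarith) hα0.le)
    have had : 1 ≤ ((j:ℝ)/2) * δ j := by
      have hpow : (j:ℝ) * (j:ℝ)^(-α) = (j:ℝ)^(1-α) := by
        rw [show (1-α:ℝ) = 1 + -α by ring, Real.rpow_add hj0, Real.rpow_one]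
      simp only [hδ]
      nlinarith [hpow, hKb]
    have hb : (((j+1:ℕ)):ℝ)/2 = (j:ℝ)/2 + 1/2 := by push_cast; ring
    exact ratio_bound (by linarith) hb hd0 hd he0 hed had hgj hgj1
  -- conclude summability
  refine (summable_nat_add_iff (M+1)).mp ?_
  have hq : -(α*p) < -1 := by linarith
  have hsummaj : Summable (fun k : ℕ => (6:ℝ)^p * (((k+(M+2):ℕ)):ℝ)^(-(α*p))) := by
    apply Summable.mul_left
    exact (summable_nat_add_iff (M+2)).mpr (Real.summable_nat_rpow.mpr hq)
  refine Summable.of_nonneg_of_le (fun k => ?_) (fun k => ?_) hsummaj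
  · exact Real.rpow_nonneg (abs_nonneg _) p
  · show |η (k+(M+1)+1) ω / η (k+(M+1)+2) ω - 1| ^ p ≤ _
    have hidx1 : k+(M+1)+1 = k+(M+2) := by omega
    have hidx2 : k+(M+1)+2 = (k+(M+2))+1 := by omega
    rw [hidx1, hidx2]
    have h6 := hpt (k+(M+2)) (by omega)
    calc |η (k+(M+2)) ω / η ((k+(M+2))+1) ω - 1| ^ p
        ≤ (6 * (((k+(M+2):ℕ)):ℝ)^(-α))^p :=
          Real.rpow_le_rpow (abs_nonneg _) h6 hp0.le
    _ = (6:ℝ)^p * (((k+(M+2):ℕ)):ℝ)^(-(α*p)) := by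
        rw [Real.mul_rpow (by norm_num) (Real.rpow_nonneg (Nat.cast_nonneg _) _),
          ← Real.rpow_mul (Nat.cast_nonneg _)]
        congr 2
        ring
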